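/- Let μ* ∈ 𝒫(X) be the unique fixed point of the mean-field equilibrium operator H and set π* := f_{μ*}. Let ε > 0, let π_ε : X → U be a policy with sup_{x∈X} ‖π_ε(x) − π*(x)‖₁ ≤ ε, and let μ_ε ∈ 𝒫(X) be an invariant distribution for π_ε, i.e., μ_ε(·) = ∑_{x∈X} P(·|x,π_ε(x),μ_ε) μ_ε(x). Then ‖μ_ε − μ*‖₁ ≤ K1 ε / (1 − C1), where C1 := 3K1/2 + K1 K_{H1}/(2ρ). (Key estimate in the proof of Theorem 1.) -/

import Mathlib

namespace MFG

open Finset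

def IsProb {E : Type*} [Fintype E] (μ : E → ℝ) : Prop :=
  (∀ e, 0 ≤ μ e) ∧ ∑ e, μ e = 1

def l1 {E : Type*} [Fintype E] (μ ν : E → ℝ) : ℝ :=
  ∑ e, |μ e - ν e|

def ind {E : Type*} [DecidableEq E] (x y : E) : ℝ :=
  if x = y then 0 else 1

def RewardLip {X A : Type*} [Fintype X] [Fintype A] [DecidableEq X] [DecidableEq A]
    (r : X → A → (X → ℝ) → ℝ) (L1 : ℝ) : Prop :=
  ∀ x x' a a' μ μ', IsProb μ → IsProb μ' →
    |r x a μ - r x' a' μ'| ≤ L1 * (ind x x' + 2 * ind a a' + l1 μ μ')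

def KernelLip {X A : Type*} [Fintype X] [Fintype A] [DecidableEq X] [DecidableEq A]
    (p : X → A → (X → ℝ) → X → ℝ) (K1 : ℝ) : Prop :=
  ∀ x x' a a' μ μ', IsProb μ → IsProb μ' →
    l1 (p x a μ) (p x' a' μ') ≤ K1 * (ind x x' + 2 * ind a a' + l1 μ μ')

def IsKernel {X A : Type*} [Fintype X] [Fintype A]
    (p : X → A → (X → ℝ) → X → ℝ) : Prop :=
  ∀ x a μ, IsProb μ → IsProb (p x a μ)

def RewardNonneg {X A : Type*} [Fintype X] [Fintype A]
    (r : X → A → (X → ℝ) → ℝ) : Prop :=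
  ∀ x a μ, IsProb μ → 0 ≤ r x a μ

def OmegaLip {A : Type*} [Fintype A] (Ω : (A → ℝ) → ℝ) (Lreg : ℝ) : Prop :=
  ∀ u v, IsProb u → IsProb v → |Ω u - Ω v| ≤ Lreg * l1 u v

def StrongConvex {A : Type*} [Fintype A] (Ω : (A → ℝ) → ℝ)
    (DΩ : (A → ℝ) → (A → ℝ)) (ρ : ℝ) : Prop :=
  ∀ u v, IsProb u → IsProb v →
    Ω u + (∑ a, DΩ u a * (v a - u a)) + ρ / 2 * (l1 u v) ^ 2 ≤ Ω v

noncomputable def Tbell {X A : Type*} [Fintype X] [Fintype A]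
    (r : X → A → (X → ℝ) → ℝ) (p : X → A → (X → ℝ) → X → ℝ)
    (Ω : (A → ℝ) → ℝ) (β : ℝ) (μ : X → ℝ) (v : X → ℝ) (x : X) : ℝ :=
  ⨆ u : {w : A → ℝ // IsProb w},
    ((∑ a, r x a μ * u.1 a) - Ω u.1 + β * ∑ y, v y * (∑ a, p x a μ y * u.1 a))

noncomputable def Qmax {X A : Type*} [Fintype A] (Q : X → (A → ℝ) → ℝ) (y : X) : ℝ :=
  ⨆ u : {w : A → ℝ // IsProb w}, Q y u.1

noncomputable def Lbell {X A : Type*} [Fintype X] [Fintype A]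
    (r : X → A → (X → ℝ) → ℝ) (p : X → A → (X → ℝ) → X → ℝ)
    (Ω : (A → ℝ) → ℝ) (β : ℝ) (μ : X → ℝ) (Q : X → (A → ℝ) → ℝ)
    (x : X) (u : A → ℝ) : ℝ :=
  (∑ a, r x a μ * u a) - Ω u + β * ∑ y, Qmax Q y * (∑ a, p x a μ y * u a)

def BddFixedPoint {X A : Type*} [Fintype X] [Fintype A]
    (r : X → A → (X → ℝ) → ℝ) (p : X → A → (X → ℝ) → X → ℝ)
    (Ω : (A → ℝ) → ℝ) (β : ℝ) (μ : X → ℝ) (Q : X → (A → ℝ) → ℝ) : Prop :=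
  (∃ C, ∀ x u, IsProb u → |Q x u| ≤ C) ∧
  (∀ x u, IsProb u → Q x u = Lbell r p Ω β μ Q x u)



lemma centered {F : Type*} [Fintype F] (v Δ : F → ℝ) (lo hi : ℝ)
    (hv : ∀ z, lo ≤ v z ∧ v z ≤ hi) (hΔ : ∑ z, Δ z = 0) :
    |∑ z, v z * Δ z| ≤ (hi - lo) / 2 * ∑ z, |Δ z| := by
  have key : ∑ z, v z * Δ z = ∑ z, (v z - (hi + lo)/2) * Δ z := by
    rw [← sub_eq_zero, ← Finset.sum_sub_distrib]
    have : ∀ z ∈ Finset.univ, v z * Δ z - (v z - (hi+lo)/2) * Δ z = (hi+lo)/2 * Δ z := by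
      intro z _; ring
    rw [Finset.sum_congr rfl this, ← Finset.mul_sum, hΔ, mul_zero]
  rw [key]
  calc |∑ z, (v z - (hi + lo)/2) * Δ z| ≤ ∑ z, |(v z - (hi + lo)/2) * Δ z| :=
        Finset.abs_sum_le_sum_abs _ _
    _ ≤ ∑ z, (hi - lo)/2 * |Δ z| := by
        apply Finset.sum_le_sum
        intro z _
        rw [abs_mul]
        apply mul_le_mul_of_nonneg_right _ (abs_nonneg _)
        rw [abs_le]
        constructor <;> [linarith [(hv z).1]; linarith [(hv z).2]]
    _ = (hi - lo)/2 * ∑ z, |Δ z| := by rw [Finset.mul_sum]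

lemma pairing {E F : Type*} [Fintype E] [Fintype F] [Nonempty E]
    (q : E → F → ℝ) (δ : E → ℝ) (K : ℝ)
    (hq : ∀ e e', ∑ y, |q e y - q e' y| ≤ 2 * K) (hδ : ∑ e, δ e = 0) :
    ∑ y, |∑ e, q e y * δ e| ≤ K * ∑ e, |δ e| := by
  classical
  set P : E → ℝ := fun e => max (δ e) 0 with hP
  set N : E → ℝ := fun e => max (-δ e) 0 with hN
  have hPn : ∀ e, 0 ≤ P e := fun e => le_max_right _ _
  have hNn : ∀ e, 0 ≤ N e := fun e => le_max_right _ _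
  have hdiff : ∀ e, δ e = P e - N e := by
    intro e; simp only [hP, hN]; rcases le_total (δ e) 0 with h | h <;>
      [simp [max_eq_right h, max_eq_left (by linarith : (0:ℝ) ≤ -δ e)];
       simp [max_eq_left h, max_eq_right (by linarith : -δ e ≤ 0)]]
  have habs : ∀ e, |δ e| = P e + N e := by
    intro e; simp only [hP, hN]; rcases le_total (δ e) 0 with h | h <;>
      [simp [abs_of_nonpos h, max_eq_right h, max_eq_left (by linarith : (0:ℝ) ≤ -δ e)];
       simp [abs_of_nonneg h, max_eq_left h, max_eq_right (by linarith : -δ e ≤ 0)]]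
  set m : ℝ := ∑ e, P e with hm
  have hmN : ∑ e, N e = m := by
    have h0 : ∑ e, (P e - N e) = ∑ e, δ e := Finset.sum_congr rfl (fun e _ => (hdiff e).symm)
    rw [hδ, Finset.sum_sub_distrib] at h0; linarith
  have habs_sum : ∑ e, |δ e| = 2 * m := by
    rw [Finset.sum_congr rfl (fun e _ => habs e), Finset.sum_add_distrib, hmN]; ring
  have hm0 : 0 ≤ m := Finset.sum_nonneg (fun e _ => hPn e)
  have hK0 : 0 ≤ K := by
    inhabit E
    have := hq default default
    simp at this
    linarith
  rcases eq_or_lt_of_le hm0 with hmz | hmz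
  · have hz : ∀ e, δ e = 0 := by
      intro e
      have h1 : P e = 0 := by
        have h3 := Finset.sum_nonneg (fun e' (_ : e' ∈ Finset.univ.erase e) => hPn e')
        have h2 := Finset.add_sum_erase Finset.univ P (Finset.mem_univ e)
        nlinarith [hPn e]
      have h1' : N e = 0 := by
        have h3 := Finset.sum_nonneg (fun e' (_ : e' ∈ Finset.univ.erase e) => hNn e')
        have h2 := Finset.add_sum_erase Finset.univ N (Finset.mem_univ e)
        rw [hmN] at h2
        nlinarith [hNn e]
      rw [hdiff e, h1, h1']; ring
    have hz2 : ∀ y, ∑ e, q e y * δ e = 0 := by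
      intro y; apply Finset.sum_eq_zero; intro e _; rw [hz e]; ring
    simp only [hz2, abs_zero, Finset.sum_const_zero]
    positivity
  · have key' : ∀ y, m * (∑ e, q e y * δ e) = ∑ e, ∑ e', P e * N e' * (q e y - q e' y) := by
      intro y
      have step1 : ∑ e, ∑ e', P e * N e' * (q e y - q e' y)
          = ∑ e, (P e * q e y * (∑ e', N e') - P e * (∑ e', N e' * q e' y)) := by
        apply Finset.sum_congr rfl; intro e _
        rw [Finset.mul_sum, Finset.mul_sum, ← Finset.sum_sub_distrib]
        apply Finset.sum_congr rfl; intro e' _; ring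
      have step2 : ∑ e, q e y * δ e = (∑ e, P e * q e y) - (∑ e, N e * q e y) := by
        rw [← Finset.sum_sub_distrib]
        apply Finset.sum_congr rfl; intro e _; rw [hdiff e]; ring
      rw [step1, Finset.sum_sub_distrib, ← Finset.sum_mul, ← Finset.sum_mul, hmN, step2]
      have : ∑ e', N e' * q e' y = ∑ e, N e * q e y := rfl
      rw [this, ← hm]
      ring
    have habs_eq : ∀ y, |∑ e, q e y * δ e|
        = (1/m) * |∑ e, ∑ e', P e * N e' * (q e y - q e' y)| := by
      intro y
      rw [← key' y, abs_mul, abs_of_pos hmz]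
      field_simp
    calc ∑ y, |∑ e, q e y * δ e|
        = ∑ y, (1/m) * |∑ e, ∑ e', P e * N e' * (q e y - q e' y)| := by
          exact Finset.sum_congr rfl (fun y _ => habs_eq y)
      _ ≤ ∑ y, (1/m) * ∑ e, ∑ e', P e * N e' * |q e y - q e' y| := by
          apply Finset.sum_le_sum; intro y _
          apply mul_le_mul_of_nonneg_left _ (by positivity)
          calc |∑ e, ∑ e', P e * N e' * (q e y - q e' y)|
              ≤ ∑ e, |∑ e', P e * N e' * (q e y - q e' y)| := Finset.abs_sum_le_sum_abs _ _
            _ ≤ ∑ e, ∑ e', P e * N e' * |q e y - q e' y| := by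
                apply Finset.sum_le_sum; intro e _
                calc |∑ e', P e * N e' * (q e y - q e' y)|
                    ≤ ∑ e', |P e * N e' * (q e y - q e' y)| := Finset.abs_sum_le_sum_abs _ _
                  _ = ∑ e', P e * N e' * |q e y - q e' y| := by
                      apply Finset.sum_congr rfl; intro e' _
                      rw [abs_mul, abs_of_nonneg (by positivity : (0:ℝ) ≤ P e * N e')]
      _ = (1/m) * ∑ e, ∑ e', P e * N e' * (∑ y, |q e y - q e' y|) := by
          rw [← Finset.mul_sum]
          congr 1
          rw [Finset.sum_comm]
          apply Finset.sum_congr rfl; intro e _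
          rw [Finset.sum_comm]
          apply Finset.sum_congr rfl; intro e' _
          rw [Finset.mul_sum]
      _ ≤ (1/m) * ∑ e, ∑ e', P e * N e' * (2*K) := by
          apply mul_le_mul_of_nonneg_left _ (by positivity)
          apply Finset.sum_le_sum; intro e _
          apply Finset.sum_le_sum; intro e' _
          exact mul_le_mul_of_nonneg_left (hq e e') (by positivity)
      _ = (1/m) * (m * (m * (2*K))) := by
          congr 1
          have hinner : ∀ e, ∑ e', P e * N e' * (2*K) = P e * ((2*K) * m) := by
            intro e
            rw [← hmN, Finset.mul_sum, Finset.mul_sum]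
            apply Finset.sum_congr rfl; intro e' _; ring
          rw [Finset.sum_congr rfl (fun e _ => hinner e), ← Finset.sum_mul, ← hm]
          ring
      _ = K * ∑ e, |δ e| := by rw [habs_sum]; field_simp


set_option maxHeartbeats 1000000 in
/-- key estimate in the proof of Theorem 1:
`‖μ_ε - μ*‖₁ ≤ K1 ε / (1 - C1)` with `C1 = 3K1/2 + K1 K_{H1}/(2ρ)`. -/
theorem statement11 {X A : Type*} [Fintype X] [Fintype A] [Nonempty X] [Nonempty A]
    [DecidableEq X] [DecidableEq A]
    (r : X → A → (X → ℝ) → ℝ) (p : X → A → (X → ℝ) → X → ℝ)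
    (L1 K1 : ℝ) (hL1 : 0 ≤ L1) (hK1 : 0 ≤ K1)
    (hr_nonneg : RewardNonneg r) (hr : RewardLip r L1)
    (hp_prob : IsKernel p) (hp : KernelLip p K1)
    (Ω : (A → ℝ) → ℝ) (DΩ : (A → ℝ) → (A → ℝ)) (ρ : ℝ) (hρ : 0 < ρ)
    (hΩ : StrongConvex Ω DΩ ρ)
    (β : ℝ) (hβ0 : 0 < β) (hβ1 : β < 1) (hβK : β * K1 / 2 < 1)
    -- Assumption 2: K_H < 1
    (hKH : (3 * K1 / 2) * (1 + ((L1 / (1 - β * K1 / 2)) / (1 - β)) / ρ) < 1)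
    -- μ* and π* = f_{μ*}: μ* is the fixed point of the MFE operator H
    (μstar : X → ℝ) (hμstar : IsProb μstar)
    (Qstar : X → (A → ℝ) → ℝ) (hQstar : BddFixedPoint r p Ω β μstar Qstar)
    (πstar : X → A → ℝ) (hπstar : ∀ x, IsProb (πstar x))
    (hπstarmax : ∀ x u, IsProb u → Qstar x u ≤ Qstar x (πstar x))
    (hfix : ∀ y, μstar y = ∑ x, (∑ a, p x a μstar y * πstar x a) * μstar x)
    -- the ε-approximating policy and an invariant distribution for it
    (ε : ℝ) (hε : 0 < ε)
    (πeps : X → A → ℝ) (hπeps : ∀ x, IsProb (πeps x))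
    (hclose : ∀ x, l1 (πeps x) (πstar x) ≤ ε)
    (μeps : X → ℝ) (hμeps : IsProb μeps)
    (hinv : ∀ y, μeps y = ∑ x, (∑ a, p x a μeps y * πeps x a) * μeps x) :
    l1 μeps μstar ≤
      K1 * ε /
        (1 - (3 * K1 / 2 + K1 * ((L1 / (1 - β * K1 / 2)) / (1 - β)) / (2 * ρ))) := by
  classical
  haveI : Nonempty {w : A → ℝ // IsProb w} := ⟨⟨πstar (Classical.arbitrary X), hπstar _⟩⟩
  have hden1 : (0:ℝ) < 1 - β * K1 / 2 := by linarith
  have hden2 : (0:ℝ) < 1 - β := by linarith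
  set QL : ℝ := L1 / (1 - β * K1 / 2) with hQLdef
  have hQL0 : 0 ≤ QL := div_nonneg hL1 hden1.le
  set KH1 : ℝ := QL / (1 - β) with hKH1def
  have hKH10 : 0 ≤ KH1 := div_nonneg hQL0 hden2.le
  have hindX : ∀ (e e' : X), (0:ℝ) ≤ ind e e' ∧ ind e e' ≤ 1 := by
    intro e e'; unfold ind; split <;> norm_num
  have hindA : ∀ (e e' : A), (0:ℝ) ≤ ind e e' ∧ ind e e' ≤ 1 := by
    intro e e'; unfold ind; split <;> norm_num
  have hl1stst : l1 μstar μstar = 0 := by unfold l1; simp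
  have hl1epep : l1 μeps μeps = 0 := by unfold l1; simp
  -- the value function V and linear coefficients c
  set V : X → ℝ := fun y => Qstar y (πstar y) with hVdef
  have hQm : ∀ y, Qmax Qstar y = V y := by
    intro y
    apply le_antisymm
    · exact ciSup_le fun u => hπstarmax y u.1 u.2
    · exact le_ciSup (f := fun u : {w : A → ℝ // IsProb w} => Qstar y u.1)
        ⟨V y, by rintro z ⟨u, rfl⟩; exact hπstarmax y u.1 u.2⟩ ⟨πstar y, hπstar y⟩
  set c : X → A → ℝ := fun x a => r x a μstar + β * ∑ y, V y * p x a μstar y with hcdef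
  have hQrep : ∀ x u, IsProb u → Qstar x u = (∑ a, c x a * u a) - Ω u := by
    intro x u hu
    rw [hQstar.2 x u hu]
    unfold Lbell
    simp only [hQm]
    have hswap : ∑ y, V y * (∑ a, p x a μstar y * u a)
        = ∑ a, (∑ y, V y * p x a μstar y) * u a := by
      simp only [Finset.mul_sum]
      rw [Finset.sum_comm]
      apply Finset.sum_congr rfl; intro a _
      rw [Finset.sum_mul]
      apply Finset.sum_congr rfl; intro y _; ring
    rw [hswap]
    have hc : ∑ a, c x a * u a
        = ∑ a, (r x a μstar * u a + β * ((∑ y, V y * p x a μstar y) * u a)) := by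
      apply Finset.sum_congr rfl; intro a _; simp only [hcdef]; ring
    rw [hc, Finset.sum_add_distrib, ← Finset.mul_sum]
    ring
  -- oscillation of V
  obtain ⟨ymax, -, hymax⟩ := Finset.exists_max_image Finset.univ V Finset.univ_nonempty
  obtain ⟨ymin, -, hymin⟩ := Finset.exists_min_image Finset.univ V Finset.univ_nonempty
  set S : ℝ := V ymax - V ymin with hSdef
  have hS0 : 0 ≤ S := by
    have := hymax ymin (Finset.mem_univ _); rw [hSdef]; linarith
  have hkerdiff : ∀ x x' a, ∑ y, |p x a μstar y - p x' a μstar y| ≤ K1 := by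
    intro x x' a
    have h := hp x x' a a μstar μstar hμstar hμstar
    have h1 : ind a a = (0:ℝ) := by simp [ind]
    rw [h1, hl1stst] at h
    unfold l1 at h
    have h3 := hindX x x'
    nlinarith
  have hcd : ∀ x x' a, |c x a - c x' a| ≤ L1 + β * (S / 2 * K1) := by
    intro x x' a
    have h1 : |r x a μstar - r x' a μstar| ≤ L1 := by
      have h := hr x x' a a μstar μstar hμstar hμstar
      have ha : ind a a = (0:ℝ) := by simp [ind]
      rw [ha, hl1stst] at h
      have h3 := hindX x x'
      nlinarith
    have hsum0 : ∑ y, (p x a μstar y - p x' a μstar y) = 0 := by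
      rw [Finset.sum_sub_distrib, (hp_prob x a μstar hμstar).2, (hp_prob x' a μstar hμstar).2]
      ring
    have h2 : |∑ y, V y * (p x a μstar y - p x' a μstar y)| ≤ S / 2 * K1 := by
      have hc := centered V (fun y => p x a μstar y - p x' a μstar y) (V ymin) (V ymax)
        (fun z => ⟨hymin z (Finset.mem_univ z), hymax z (Finset.mem_univ z)⟩) hsum0
      calc |∑ y, V y * (p x a μstar y - p x' a μstar y)|
          ≤ (V ymax - V ymin) / 2 * ∑ y, |p x a μstar y - p x' a μstar y| := hc
        _ ≤ S / 2 * K1 := by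
            rw [← hSdef]
            exact mul_le_mul_of_nonneg_left (hkerdiff x x' a) (by linarith)
    have hdiff : c x a - c x' a
        = (r x a μstar - r x' a μstar) + β * ∑ y, V y * (p x a μstar y - p x' a μstar y) := by
      have hsplit : ∑ y, V y * (p x a μstar y - p x' a μstar y)
          = (∑ y, V y * p x a μstar y) - ∑ y, V y * p x' a μstar y := by
        rw [← Finset.sum_sub_distrib]
        apply Finset.sum_congr rfl; intro y _; ring
      simp only [hcdef]; rw [hsplit]; ring
    calc |c x a - c x' a|
        = |(r x a μstar - r x' a μstar) + β * ∑ y, V y * (p x a μstar y - p x' a μstar y)| := by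
          rw [hdiff]
      _ ≤ |r x a μstar - r x' a μstar| + |β| * |∑ y, V y * (p x a μstar y - p x' a μstar y)| := by
          rw [← abs_mul]; exact abs_add_le _ _
      _ ≤ L1 + β * (S / 2 * K1) := by
          rw [abs_of_pos hβ0]
          exact add_le_add h1 (mul_le_mul_of_nonneg_left h2 hβ0.le)
  have hSQL : S ≤ QL := by
    have hopt := hπstarmax ymin (πstar ymax) (hπstar ymax)
    have hVmaxle : V ymax - V ymin ≤ Qstar ymax (πstar ymax) - Qstar ymin (πstar ymax) := by
      simp only [hVdef]; linarith
    rw [hQrep ymax _ (hπstar ymax), hQrep ymin _ (hπstar ymax)] at hVmaxle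
    have hdiffsum : (∑ a, c ymax a * πstar ymax a) - (∑ a, c ymin a * πstar ymax a)
        = ∑ a, (c ymax a - c ymin a) * πstar ymax a := by
      rw [← Finset.sum_sub_distrib]
      apply Finset.sum_congr rfl; intro a _; ring
    have hub : ∑ a, (c ymax a - c ymin a) * πstar ymax a ≤ L1 + β * (S / 2 * K1) := by
      calc ∑ a, (c ymax a - c ymin a) * πstar ymax a
          ≤ ∑ a, (L1 + β * (S / 2 * K1)) * πstar ymax a := by
            apply Finset.sum_le_sum; intro a _
            apply mul_le_mul_of_nonneg_right _ ((hπstar ymax).1 a)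
            exact le_trans (le_abs_self _) (hcd ymax ymin a)
        _ = L1 + β * (S / 2 * K1) := by
            rw [← Finset.mul_sum, (hπstar ymax).2, mul_one]
    have hSle : S ≤ L1 + β * (S / 2 * K1) := by
      have : S ≤ V ymax - V ymin := le_of_eq hSdef
      linarith [hVmaxle, hub, hdiffsum]
    rw [hQLdef, le_div_iff₀ hden1]; nlinarith
  have hcQL : ∀ x x' a, |c x a - c x' a| ≤ QL := by
    intro x x' a
    have h := hcd x x' a
    have hLQL : QL * (1 - β * K1 / 2) = L1 := by
      rw [hQLdef]; exact div_mul_cancel₀ _ hden1.ne'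
    have hb : β * (S / 2 * K1) ≤ β * (QL / 2 * K1) := by
      apply mul_le_mul_of_nonneg_left _ hβ0.le
      apply mul_le_mul_of_nonneg_right _ hK1
      linarith
    nlinarith
  -- quadratic growth at the maximizer
  have hquad : ∀ x u, IsProb u →
      (∑ a, c x a * u a) - Ω u + ρ / 2 * (l1 u (πstar x)) ^ 2
        ≤ (∑ a, c x a * πstar x a) - Ω (πstar x) := by
    intro x u hu
    set f : A → ℝ := πstar x with hfdef
    set d : ℝ := l1 u f with hddef
    have hd0 : 0 ≤ d := Finset.sum_nonneg fun a _ => abs_nonneg _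
    have key : ∀ t : ℝ, 0 < t → t ≤ 1 →
        (∑ a, c x a * u a) - Ω u + ρ / 2 * (1 - t) * d ^ 2
          ≤ (∑ a, c x a * f a) - Ω f := by
      intro t ht0 ht1
      set w : A → ℝ := fun a => (1 - t) * f a + t * u a with hwdef
      have hw : IsProb w := by
        constructor
        · intro a
          have := (hπstar x).1 a
          have := hu.1 a
          simp only [hwdef]
          nlinarith
        · simp only [hwdef]
          rw [Finset.sum_add_distrib, ← Finset.mul_sum, ← Finset.mul_sum,
            (hπstar x).2, hu.2]
          ring
      have h1 := hΩ w f hw (hπstar x)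
      have h2 := hΩ w u hw hu
      have l1wf : l1 w f = t * d := by
        rw [hddef]; unfold l1
        rw [Finset.mul_sum]
        apply Finset.sum_congr rfl; intro a _
        have : w a - f a = t * (u a - f a) := by simp only [hwdef]; ring
        rw [this, abs_mul, abs_of_pos ht0]
      have l1wu : l1 w u = (1 - t) * d := by
        rw [hddef]; unfold l1
        rw [Finset.mul_sum]
        apply Finset.sum_congr rfl; intro a _
        have h5 : w a - u a = (1 - t) * (f a - u a) := by simp only [hwdef]; ring
        rw [h5, abs_mul, abs_of_nonneg (by linarith : (0:ℝ) ≤ 1 - t), abs_sub_comm]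
      have hgrad : (1 - t) * (∑ a, DΩ w a * (f a - w a))
          + t * (∑ a, DΩ w a * (u a - w a)) = 0 := by
        rw [Finset.mul_sum, Finset.mul_sum, ← Finset.sum_add_distrib]
        apply Finset.sum_eq_zero; intro a _
        simp only [hwdef]; ring
      have hopt : (∑ a, c x a * w a) - Ω w ≤ (∑ a, c x a * f a) - Ω f := by
        rw [← hQrep x w hw, ← hQrep x f (hπstar x)]
        exact hπstarmax x w hw
      have hcw : ∑ a, c x a * w a = (1 - t) * (∑ a, c x a * f a) + t * (∑ a, c x a * u a) := by
        rw [Finset.mul_sum, Finset.mul_sum, ← Finset.sum_add_distrib]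
        apply Finset.sum_congr rfl; intro a _
        simp only [hwdef]; ring
      rw [l1wf] at h1
      rw [l1wu] at h2
      have H1 := mul_le_mul_of_nonneg_left h1 (by linarith : (0:ℝ) ≤ 1 - t)
      have H2 := mul_le_mul_of_nonneg_left h2 ht0.le
      have goalt : t * ((∑ a, c x a * u a) - Ω u + ρ / 2 * (1 - t) * d ^ 2)
          ≤ t * ((∑ a, c x a * f a) - Ω f) := by
        linarith [H1, H2, hgrad, hopt, hcw]
      exact le_of_mul_le_mul_left goalt ht0
    have hη : ∀ η : ℝ, 0 < η →
        (∑ a, c x a * u a) - Ω u + ρ / 2 * d ^ 2 ≤ (∑ a, c x a * f a) - Ω f + η := by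
      intro η hη
      have hD : (0:ℝ) < ρ / 2 * d ^ 2 + η := by positivity
      set t : ℝ := min 1 (η / (ρ / 2 * d ^ 2 + η)) with htdef
      have ht1 : t ≤ 1 := min_le_left _ _
      have ht0 : 0 < t := lt_min one_pos (div_pos hη hD)
      have hk := key t ht0 ht1
      have hsm : ρ / 2 * t * d ^ 2 ≤ η := by
        have htr : t ≤ η / (ρ / 2 * d ^ 2 + η) := min_le_right _ _
        have h3 : ρ / 2 * d ^ 2 * t ≤ ρ / 2 * d ^ 2 * (η / (ρ / 2 * d ^ 2 + η)) :=
          mul_le_mul_of_nonneg_left htr (by positivity)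
        have h4 : ρ / 2 * d ^ 2 * (η / (ρ / 2 * d ^ 2 + η)) ≤ η := by
          rw [mul_comm, div_mul_eq_mul_div, div_le_iff₀ hD]
          nlinarith [hη, sq_nonneg d, hρ.le]
        nlinarith
      nlinarith [hk, hsm]
    exact le_of_forall_pos_le_add hη
  -- Lipschitz property of the optimal policy
  have hLipf : ∀ x x', l1 (πstar x) (πstar x') ≤ KH1 / ρ := by
    intro x x'
    set d : ℝ := l1 (πstar x) (πstar x') with hddef
    have hd0 : 0 ≤ d := Finset.sum_nonneg fun a _ => abs_nonneg _
    have hsymm : l1 (πstar x') (πstar x) = d := by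
      rw [hddef]; unfold l1
      apply Finset.sum_congr rfl; intro a _; exact abs_sub_comm _ _
    have h1 := hquad x (πstar x') (hπstar x')
    have h2 := hquad x' (πstar x) (hπstar x)
    rw [hsymm] at h1
    rw [← hddef] at h2
    have hexp : ∑ a, (c x a - c x' a) * (πstar x a - πstar x' a)
        = ((∑ a, c x a * πstar x a) - (∑ a, c x a * πstar x' a))
          - ((∑ a, c x' a * πstar x a) - (∑ a, c x' a * πstar x' a)) := by
      rw [← Finset.sum_sub_distrib, ← Finset.sum_sub_distrib, ← Finset.sum_sub_distrib]
      apply Finset.sum_congr rfl; intro a _; ring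
    have hsum : ρ * d ^ 2 ≤ ∑ a, (c x a - c x' a) * (πstar x a - πstar x' a) := by
      rw [hexp]; linarith
    have hub : ∑ a, (c x a - c x' a) * (πstar x a - πstar x' a) ≤ QL * d := by
      calc ∑ a, (c x a - c x' a) * (πstar x a - πstar x' a)
          ≤ ∑ a, |c x a - c x' a| * |πstar x a - πstar x' a| := by
            apply Finset.sum_le_sum; intro a _
            rw [← abs_mul]; exact le_abs_self _
        _ ≤ ∑ a, QL * |πstar x a - πstar x' a| := by
            apply Finset.sum_le_sum; intro a _
            exact mul_le_mul_of_nonneg_right (hcQL x x' a) (abs_nonneg _)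
        _ = QL * d := by rw [← Finset.mul_sum]; rfl
    have hQLKH1 : QL ≤ KH1 := by
      rw [hKH1def, le_div_iff₀ hden2]; nlinarith
    rcases eq_or_lt_of_le hd0 with h | h
    · rw [← h]; positivity
    · rw [le_div_iff₀ hρ]
      have : ρ * d ≤ QL := by nlinarith
      nlinarith
  -- main decomposition
  set Aq : X → ℝ := fun y => ∑ x, (∑ a, p x a μeps y * (πeps x a - πstar x a)) * μeps x with hAdef
  set Bq : X → ℝ := fun y => ∑ x, (∑ a, (p x a μeps y - p x a μstar y) * πstar x a) * μeps x
    with hBdef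
  set Cq : X → ℝ := fun y => ∑ x, (∑ a, p x a μstar y * πstar x a) * (μeps x - μstar x) with hCdef
  have hsplit : ∀ y, μeps y - μstar y = Aq y + Bq y + Cq y := by
    intro y
    rw [hinv y, hfix y]
    simp only [hAdef, hBdef, hCdef]
    rw [← Finset.sum_add_distrib, ← Finset.sum_add_distrib, ← Finset.sum_sub_distrib]
    apply Finset.sum_congr rfl; intro x _
    simp only [mul_sub, sub_mul, Finset.sum_sub_distrib]
    ring
  set D : ℝ := l1 μeps μstar with hDdef
  have hD0 : 0 ≤ D := Finset.sum_nonneg fun e _ => abs_nonneg _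
  -- bound for A
  have hAle : ∑ y, |Aq y| ≤ K1 * ε := by
    have hin : ∀ x, ∑ y, |∑ a, p x a μeps y * (πeps x a - πstar x a)| ≤ K1 * ε := by
      intro x
      have hq : ∀ a a', ∑ y, |p x a μeps y - p x a' μeps y| ≤ 2 * K1 := by
        intro a a'
        have h := hp x x a a' μeps μeps hμeps hμeps
        have h1 : ind x x = (0:ℝ) := by simp [ind]
        rw [h1, hl1epep] at h
        unfold l1 at h
        have h3 := hindA a a'
        nlinarith
      have hδ : ∑ a, (πeps x a - πstar x a) = 0 := by
        rw [Finset.sum_sub_distrib, (hπeps x).2, (hπstar x).2]; ring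
      have := pairing (fun a y => p x a μeps y) (fun a => πeps x a - πstar x a) K1 hq hδ
      calc ∑ y, |∑ a, p x a μeps y * (πeps x a - πstar x a)| ≤ K1 * ∑ a, |πeps x a - πstar x a| :=
            this
        _ ≤ K1 * ε := mul_le_mul_of_nonneg_left (hclose x) hK1
    calc ∑ y, |Aq y|
        ≤ ∑ y, ∑ x, |∑ a, p x a μeps y * (πeps x a - πstar x a)| * μeps x := by
          apply Finset.sum_le_sum; intro y _
          simp only [hAdef]
          calc |∑ x, (∑ a, p x a μeps y * (πeps x a - πstar x a)) * μeps x|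
              ≤ ∑ x, |(∑ a, p x a μeps y * (πeps x a - πstar x a)) * μeps x| :=
                Finset.abs_sum_le_sum_abs _ _
            _ = ∑ x, |∑ a, p x a μeps y * (πeps x a - πstar x a)| * μeps x := by
                apply Finset.sum_congr rfl; intro x _
                rw [abs_mul, abs_of_nonneg (hμeps.1 x)]
      _ = ∑ x, (∑ y, |∑ a, p x a μeps y * (πeps x a - πstar x a)|) * μeps x := by
          rw [Finset.sum_comm]
          apply Finset.sum_congr rfl; intro x _
          rw [Finset.sum_mul]
      _ ≤ ∑ x, (K1 * ε) * μeps x := by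
          apply Finset.sum_le_sum; intro x _
          exact mul_le_mul_of_nonneg_right (hin x) (hμeps.1 x)
      _ = K1 * ε := by rw [← Finset.mul_sum, hμeps.2, mul_one]
  -- bound for B
  have hBle : ∑ y, |Bq y| ≤ K1 * D := by
    have hin : ∀ x, ∑ y, |∑ a, (p x a μeps y - p x a μstar y) * πstar x a| ≤ K1 * D := by
      intro x
      have hker : ∀ a, ∑ y, |p x a μeps y - p x a μstar y| ≤ K1 * D := by
        intro a
        have h := hp x x a a μeps μstar hμeps hμstar
        have h1 : ind x x = (0:ℝ) := by simp [ind]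
        have h2 : ind a a = (0:ℝ) := by simp [ind]
        rw [h1, h2] at h
        unfold l1 at h
        rw [hDdef]
        unfold l1
        calc ∑ y, |p x a μeps y - p x a μstar y| ≤ K1 * (0 + 2*0 + ∑ e, |μeps e - μstar e|) := h
          _ = K1 * ∑ e, |μeps e - μstar e| := by ring
      calc ∑ y, |∑ a, (p x a μeps y - p x a μstar y) * πstar x a|
          ≤ ∑ y, ∑ a, |p x a μeps y - p x a μstar y| * πstar x a := by
            apply Finset.sum_le_sum; intro y _
            calc |∑ a, (p x a μeps y - p x a μstar y) * πstar x a|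
                ≤ ∑ a, |(p x a μeps y - p x a μstar y) * πstar x a| :=
                  Finset.abs_sum_le_sum_abs _ _
              _ = ∑ a, |p x a μeps y - p x a μstar y| * πstar x a := by
                  apply Finset.sum_congr rfl; intro a _
                  rw [abs_mul, abs_of_nonneg ((hπstar x).1 a)]
        _ = ∑ a, (∑ y, |p x a μeps y - p x a μstar y|) * πstar x a := by
            rw [Finset.sum_comm]
            apply Finset.sum_congr rfl; intro a _
            rw [Finset.sum_mul]
        _ ≤ ∑ a, (K1 * D) * πstar x a := by
            apply Finset.sum_le_sum; intro a _
            exact mul_le_mul_of_nonneg_right (hker a) ((hπstar x).1 a)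
        _ = K1 * D := by rw [← Finset.mul_sum, (hπstar x).2, mul_one]
    calc ∑ y, |Bq y|
        ≤ ∑ y, ∑ x, |∑ a, (p x a μeps y - p x a μstar y) * πstar x a| * μeps x := by
          apply Finset.sum_le_sum; intro y _
          simp only [hBdef]
          calc |∑ x, (∑ a, (p x a μeps y - p x a μstar y) * πstar x a) * μeps x|
              ≤ ∑ x, |(∑ a, (p x a μeps y - p x a μstar y) * πstar x a) * μeps x| :=
                Finset.abs_sum_le_sum_abs _ _
            _ = ∑ x, |∑ a, (p x a μeps y - p x a μstar y) * πstar x a| * μeps x := by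
                apply Finset.sum_congr rfl; intro x _
                rw [abs_mul, abs_of_nonneg (hμeps.1 x)]
      _ = ∑ x, (∑ y, |∑ a, (p x a μeps y - p x a μstar y) * πstar x a|) * μeps x := by
          rw [Finset.sum_comm]
          apply Finset.sum_congr rfl; intro x _
          rw [Finset.sum_mul]
      _ ≤ ∑ x, (K1 * D) * μeps x := by
          apply Finset.sum_le_sum; intro x _
          exact mul_le_mul_of_nonneg_right (hin x) (hμeps.1 x)
      _ = K1 * D := by rw [← Finset.mul_sum, hμeps.2, mul_one]
  -- bound for C
  have hCle : ∑ y, |Cq y| ≤ (K1 + K1 * (KH1 / ρ)) / 2 * D := by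
    have hδ : ∑ x, (μeps x - μstar x) = 0 := by
      rw [Finset.sum_sub_distrib, hμeps.2, hμstar.2]; ring
    have hq : ∀ x x', ∑ y, |(∑ a, p x a μstar y * πstar x a) - ∑ a, p x' a μstar y * πstar x' a|
        ≤ 2 * ((K1 + K1 * (KH1 / ρ)) / 2) := by
      intro x x'
      have hdec : ∀ y, (∑ a, p x a μstar y * πstar x a) - ∑ a, p x' a μstar y * πstar x' a
          = (∑ a, (p x a μstar y - p x' a μstar y) * πstar x a)
            + ∑ a, p x' a μstar y * (πstar x a - πstar x' a) := by
        intro y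
        rw [← Finset.sum_add_distrib, ← Finset.sum_sub_distrib]
        apply Finset.sum_congr rfl; intro a _; ring
      have hpart1 : ∑ y, |∑ a, (p x a μstar y - p x' a μstar y) * πstar x a| ≤ K1 := by
        calc ∑ y, |∑ a, (p x a μstar y - p x' a μstar y) * πstar x a|
            ≤ ∑ y, ∑ a, |p x a μstar y - p x' a μstar y| * πstar x a := by
              apply Finset.sum_le_sum; intro y _
              calc |∑ a, (p x a μstar y - p x' a μstar y) * πstar x a|
                  ≤ ∑ a, |(p x a μstar y - p x' a μstar y) * πstar x a| :=
                    Finset.abs_sum_le_sum_abs _ _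
                _ = ∑ a, |p x a μstar y - p x' a μstar y| * πstar x a := by
                    apply Finset.sum_congr rfl; intro a _
                    rw [abs_mul, abs_of_nonneg ((hπstar x).1 a)]
          _ = ∑ a, (∑ y, |p x a μstar y - p x' a μstar y|) * πstar x a := by
              rw [Finset.sum_comm]
              apply Finset.sum_congr rfl; intro a _
              rw [Finset.sum_mul]
          _ ≤ ∑ a, K1 * πstar x a := by
              apply Finset.sum_le_sum; intro a _
              exact mul_le_mul_of_nonneg_right (hkerdiff x x' a) ((hπstar x).1 a)
          _ = K1 := by rw [← Finset.mul_sum, (hπstar x).2, mul_one]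
      have hpart2 : ∑ y, |∑ a, p x' a μstar y * (πstar x a - πstar x' a)| ≤ K1 * (KH1 / ρ) := by
        have hq2 : ∀ a a', ∑ y, |p x' a μstar y - p x' a' μstar y| ≤ 2 * K1 := by
          intro a a'
          have h := hp x' x' a a' μstar μstar hμstar hμstar
          have h1 : ind x' x' = (0:ℝ) := by simp [ind]
          rw [h1, hl1stst] at h
          unfold l1 at h
          have h3 := hindA a a'
          nlinarith
        have hδ2 : ∑ a, (πstar x a - πstar x' a) = 0 := by
          rw [Finset.sum_sub_distrib, (hπstar x).2, (hπstar x').2]; ring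
        have hpair := pairing (fun a y => p x' a μstar y) (fun a => πstar x a - πstar x' a)
          K1 hq2 hδ2
        calc ∑ y, |∑ a, p x' a μstar y * (πstar x a - πstar x' a)|
            ≤ K1 * ∑ a, |πstar x a - πstar x' a| := hpair
          _ ≤ K1 * (KH1 / ρ) := mul_le_mul_of_nonneg_left (hLipf x x') hK1
      calc ∑ y, |(∑ a, p x a μstar y * πstar x a) - ∑ a, p x' a μstar y * πstar x' a|
          ≤ ∑ y, (|∑ a, (p x a μstar y - p x' a μstar y) * πstar x a|
              + |∑ a, p x' a μstar y * (πstar x a - πstar x' a)|) := by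
            apply Finset.sum_le_sum; intro y _
            rw [hdec y]; exact abs_add_le _ _
        _ = (∑ y, |∑ a, (p x a μstar y - p x' a μstar y) * πstar x a|)
            + ∑ y, |∑ a, p x' a μstar y * (πstar x a - πstar x' a)| := Finset.sum_add_distrib
        _ ≤ 2 * ((K1 + K1 * (KH1 / ρ)) / 2) := by
            have := add_le_add hpart1 hpart2
            linarith
    have hpair := pairing (fun x y => ∑ a, p x a μstar y * πstar x a)
      (fun x => μeps x - μstar x) ((K1 + K1 * (KH1 / ρ)) / 2) hq hδ
    calc ∑ y, |Cq y| ≤ (K1 + K1 * (KH1 / ρ)) / 2 * ∑ x, |μeps x - μstar x| := hpair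
      _ = (K1 + K1 * (KH1 / ρ)) / 2 * D := by rw [hDdef]; rfl
  -- combine
  have hmain : D ≤ K1 * ε + K1 * D + (K1 + K1 * (KH1 / ρ)) / 2 * D := by
    have h0 : D = ∑ y, |Aq y + Bq y + Cq y| := by
      rw [hDdef]; unfold l1
      apply Finset.sum_congr rfl; intro y _; rw [hsplit y]
    calc D = ∑ y, |Aq y + Bq y + Cq y| := h0
      _ ≤ ∑ y, (|Aq y| + |Bq y| + |Cq y|) := by
          apply Finset.sum_le_sum; intro y _
          calc |Aq y + Bq y + Cq y| ≤ |Aq y + Bq y| + |Cq y| := abs_add_le _ _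
            _ ≤ |Aq y| + |Bq y| + |Cq y| := by linarith [abs_add_le (Aq y) (Bq y)]
      _ = (∑ y, |Aq y|) + (∑ y, |Bq y|) + ∑ y, |Cq y| := by
          rw [Finset.sum_add_distrib, Finset.sum_add_distrib]
      _ ≤ K1 * ε + K1 * D + (K1 + K1 * (KH1 / ρ)) / 2 * D := by
          linarith [hAle, hBle, hCle]
  have hC1 : 3 * K1 / 2 + K1 * KH1 / (2 * ρ) < 1 := by
    have h1 : 0 ≤ K1 * KH1 / ρ := by positivity
    have h2 : (3 * K1 / 2) * (1 + KH1 / ρ) = 3 * K1 / 2 + 3 * (K1 * KH1 / ρ) / 2 := by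
      ring
    have h3 : K1 * KH1 / (2 * ρ) = (K1 * KH1 / ρ) / 2 := by
      ring
    nlinarith [hKH]
  have hpos : (0:ℝ) < 1 - (3 * K1 / 2 + K1 * KH1 / (2 * ρ)) := by linarith
  have hrw : (K1 + K1 * (KH1 / ρ)) / 2 = K1 / 2 + K1 * KH1 / (2 * ρ) := by
    ring
  rw [hrw] at hmain
  rw [le_div_iff₀ hpos]
  nlinarith [hmain]

end MFG
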